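/- For n ≥ 6, the thresholds are strictly decreasing in k: r_{k+1}(n) < r_k(n) for 1 ≤ k ≤ ⌊n/2⌋ - 2; moreover for each fixed k ≥ 1, r_k(n) → 1 as n → ∞. -/

import Mathlib

open Finset

/-- Lexicographic index of edge (i,j), i<j, in K_n (1-based). -/
def idx (n i j : ℕ) : ℕ := (i - 1) * n - i * (i - 1) / 2 + (j - i)

/-- Geometric-weight cut value: sum over edges (i,j), 1 ≤ i < j ≤ n, crossing S,
of r^(N - idx(i,j)) where N = C(n,2). -/
noncomputable def cutW (n : ℕ) (S : Finset ℕ) (r : ℝ) : ℝ :=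
  ∑ i ∈ Finset.Icc 1 n, ∑ j ∈ Finset.Icc (i + 1) n,
    if (i ∈ S) ↔ (j ∈ S) then 0 else r ^ (n * (n - 1) / 2 - idx n i j)

/-- P^{n,k}(r) = W^n(C_k;r) - W^n(C_{k+1};r), where C_k = {1,...,k}. -/
noncomputable def P (n k : ℕ) (r : ℝ) : ℝ :=
  cutW n (Finset.Icc 1 k) r - cutW n (Finset.Icc 1 (k + 1)) r

open Filter

set_option linter.unreachableTactic false
set_option linter.unusedTactic false

lemma arith_key (X Y Z A B C n i j : ℕ) (hX : 2*X = n*(n-1)) (hY : 2*Y = B) (hZ : 2*Z = C)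
    (hD : n*(n-1) + B = C + 2*A + 2*(n-i)) (hBA : B ≤ A) (h2 : i < j) (h3 : j ≤ n) :
    X - (A - Y + (j-i)) = Z + (n-j) := by omega

lemma E_eq (n i j : ℕ) (h1 : 1 ≤ i) (h2 : i < j) (h3 : j ≤ n) :
    n*(n-1)/2 - idx n i j = (n-i)*(n-i-1)/2 + (n-j) := by
  unfold idx
  have hin : i ≤ n := by omega
  have hB : Even (i*(i-1)) := by
    obtain ⟨m, rfl⟩ : ∃ m, i = m + 1 := ⟨i - 1, by omega⟩
    simpa [Nat.mul_comm] using Nat.even_mul_succ_self m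
  have hC : Even ((n-i)*(n-i-1)) := by
    rcases Nat.eq_or_lt_of_le hin with h | h
    · simp [h.symm, Nat.sub_self]
    · obtain ⟨m, hm⟩ : ∃ m, n - i = m + 1 := ⟨n - i - 1, by omega⟩
      rw [hm]; simpa [Nat.mul_comm] using Nat.even_mul_succ_self m
  have hN : Even (n*(n-1)) := by
    rcases Nat.eq_zero_or_pos n with h | h
    · simp [h]
    · obtain ⟨m, rfl⟩ : ∃ m, n = m + 1 := ⟨n - 1, by omega⟩
      simpa [Nat.mul_comm] using Nat.even_mul_succ_self m
  have hX : 2*(n*(n-1)/2) = n*(n-1) := by rw [Nat.mul_comm]; exact Nat.div_mul_cancel hN.two_dvd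
  have hY : 2*(i*(i-1)/2) = i*(i-1) := by rw [Nat.mul_comm]; exact Nat.div_mul_cancel hB.two_dvd
  have hZ : 2*((n-i)*(n-i-1)/2) = (n-i)*(n-i-1) := by rw [Nat.mul_comm]; exact Nat.div_mul_cancel hC.two_dvd
  have hD : n*(n-1) + i*(i-1) = (n-i)*(n-i-1) + 2*((i-1)*n) + 2*(n-i) := by
    zify [h1, hin, show 1 ≤ n - i by omega, show (1:ℕ) ≤ n by omega]
    ring
  have hBA : i*(i-1) ≤ (i-1)*n := by
    calc i*(i-1) = (i-1)*i := by ring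
    _ ≤ (i-1)*n := Nat.mul_le_mul_left _ hin
  exact arith_key _ _ _ _ _ _ _ _ _ hX hY hZ hD hBA h2 h3
lemma P_eq (n k : ℕ) (hk : 1 ≤ k) (hkn : k + 2 ≤ n) (r : ℝ) :
    P n k r = (∑ i ∈ Icc 1 k, r ^ ((n-i)*(n-i-1)/2 + (n-k-1)))
      - ∑ j ∈ Icc (k+2) n, r ^ ((n-k-1)*(n-k-2)/2 + (n-j)) := by
  unfold P cutW
  rw [← Finset.sum_sub_distrib]
  have step1 : ∀ i ∈ Icc 1 n,
      ((∑ j ∈ Icc (i+1) n, if (i ∈ Icc 1 k) ↔ (j ∈ Icc 1 k) then (0:ℝ) else r ^ (n*(n-1)/2 - idx n i j))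
      - ∑ j ∈ Icc (i+1) n, if (i ∈ Icc 1 (k+1)) ↔ (j ∈ Icc 1 (k+1)) then (0:ℝ) else r ^ (n*(n-1)/2 - idx n i j))
      = (∑ j ∈ Icc (i+1) n, if i ≤ k ∧ j = k+1 then r ^ (n*(n-1)/2 - idx n i j) else 0)
      - ∑ j ∈ Icc (i+1) n, if i = k+1 then r ^ (n*(n-1)/2 - idx n i j) else 0 := by
    intro i hi
    rw [← Finset.sum_sub_distrib, ← Finset.sum_sub_distrib]
    refine Finset.sum_congr rfl fun j hj => ?_
    simp only [Finset.mem_Icc] at hi hj ⊢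
    split_ifs <;> first | ring1 | (exfalso; omega)
  rw [Finset.sum_congr rfl step1, Finset.sum_sub_distrib]
  congr 1
  · -- positive part
    have e1 : ∀ i ∈ Icc 1 n, (∑ j ∈ Icc (i+1) n, if i ≤ k ∧ j = k+1 then r ^ (n*(n-1)/2 - idx n i j) else 0)
        = if i ≤ k then r ^ (n*(n-1)/2 - idx n i (k+1)) else 0 := by
      intro i hi
      simp only [Finset.mem_Icc] at hi
      by_cases h : i ≤ k
      · rw [if_pos h]
        have hc : ∀ j ∈ Icc (i+1) n, (if i ≤ k ∧ j = k+1 then r ^ (n*(n-1)/2 - idx n i j) else (0:ℝ))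
            = if j = k+1 then r ^ (n*(n-1)/2 - idx n i j) else 0 := by
          intro j _; simp [h]
        rw [Finset.sum_congr rfl hc,
          Finset.sum_ite_eq' (Icc (i+1) n) (k+1) (fun j => r ^ (n*(n-1)/2 - idx n i j)),
          if_pos (by simp only [Finset.mem_Icc]; omega)]
      · simp [h]
    rw [Finset.sum_congr rfl e1, ← Finset.sum_filter]
    have : Finset.filter (fun i => i ≤ k) (Icc 1 n) = Icc 1 k := by
      ext i; simp only [Finset.mem_filter, Finset.mem_Icc]; omega
    rw [this]
    refine Finset.sum_congr rfl fun i hi => ?_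
    simp only [Finset.mem_Icc] at hi
    rw [E_eq n i (k+1) (by omega) (by omega) (by omega)]
    congr 1 <;> omega
  · -- negative part
    have e2 : ∀ i ∈ Icc 1 n, (∑ j ∈ Icc (i+1) n, if i = k+1 then r ^ (n*(n-1)/2 - idx n i j) else 0)
        = if i = k+1 then (∑ j ∈ Icc (i+1) n, r ^ (n*(n-1)/2 - idx n i j)) else 0 := by
      intro i _; split_ifs <;> simp
    rw [Finset.sum_congr rfl e2,
      Finset.sum_ite_eq' (Icc 1 n) (k+1) (fun i => ∑ j ∈ Icc (i+1) n, r ^ (n*(n-1)/2 - idx n i j)),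
      if_pos (by simp only [Finset.mem_Icc]; omega)]
    refine Finset.sum_congr rfl fun j hj => ?_
    simp only [Finset.mem_Icc] at hj
    rw [E_eq n (k+1) j (by omega) (by omega) (by omega)]
    congr 2 <;> omega
lemma key_mono (n k : ℕ) (hk : 1 ≤ k) (hkn : k + 2 ≤ n) {r1 r2 : ℝ}
    (h1 : 1 ≤ r1) (h12 : r1 < r2) (hP : 0 ≤ P n k r1) : 0 < P n k r2 := by
  have h0 : (0:ℝ) < r1 := lt_of_lt_of_le one_pos h1
  have h02 : (0:ℝ) < r2 := lt_trans h0 h12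
  set c : ℕ := (n-k-1)*(n-k-2)/2 + (n-k-1) with hc
  -- termwise bounds
  have keyA : ∀ i ∈ Icc 1 k, r2^c * r1^((n-i)*(n-i-1)/2 + (n-k-1))
      ≤ r2^((n-i)*(n-i-1)/2 + (n-k-1)) * r1^c := by
    intro i hi
    simp only [Finset.mem_Icc] at hi
    have hce : c ≤ (n-i)*(n-i-1)/2 + (n-k-1) := by
      have : (n-k-1)*(n-k-2) ≤ (n-i)*(n-i-1) :=
        Nat.mul_le_mul (by omega) (by omega)
      have := Nat.div_le_div_right (c := 2) this
      omega
    obtain ⟨d, hd⟩ : ∃ d, (n-i)*(n-i-1)/2 + (n-k-1) = c + d := ⟨_, (Nat.add_sub_cancel' hce).symm⟩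
    rw [hd]
    have e1 : r2^c * r1^(c+d) = (r2^c * r1^c) * r1^d := by ring
    have e2 : r2^(c+d) * r1^c = (r2^c * r1^c) * r2^d := by ring
    rw [e1, e2]
    exact mul_le_mul_of_nonneg_left (pow_le_pow_left₀ h0.le h12.le d) (by positivity)
  have keyB : ∀ j ∈ Icc (k+2) n, r2^((n-k-1)*(n-k-2)/2 + (n-j)) * r1^c
      < r2^c * r1^((n-k-1)*(n-k-2)/2 + (n-j)) := by
    intro j hj
    simp only [Finset.mem_Icc] at hj
    have hce : (n-k-1)*(n-k-2)/2 + (n-j) + 1 ≤ c := by omega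
    obtain ⟨d, hd⟩ : ∃ d, c = ((n-k-1)*(n-k-2)/2 + (n-j)) + d := ⟨_, (Nat.add_sub_cancel' (by omega : (n-k-1)*(n-k-2)/2 + (n-j) ≤ c)).symm⟩
    have hd1 : 1 ≤ d := by omega
    rw [hd]
    have e1 : r2^((n-k-1)*(n-k-2)/2 + (n-j)) * r1^((n-k-1)*(n-k-2)/2 + (n-j) + d)
        = (r2^((n-k-1)*(n-k-2)/2 + (n-j)) * r1^((n-k-1)*(n-k-2)/2 + (n-j))) * r1^d := by ring
    have e2 : r2^((n-k-1)*(n-k-2)/2 + (n-j) + d) * r1^((n-k-1)*(n-k-2)/2 + (n-j))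
        = (r2^((n-k-1)*(n-k-2)/2 + (n-j)) * r1^((n-k-1)*(n-k-2)/2 + (n-j))) * r2^d := by ring
    rw [e1, e2]
    exact mul_lt_mul_of_pos_left (pow_lt_pow_left₀ h12 h0.le (by omega)) (by positivity)
  have hA : r2^c * (∑ i ∈ Icc 1 k, r1 ^ ((n-i)*(n-i-1)/2 + (n-k-1)))
      ≤ (∑ i ∈ Icc 1 k, r2 ^ ((n-i)*(n-i-1)/2 + (n-k-1))) * r1^c := by
    rw [Finset.mul_sum, Finset.sum_mul]
    exact Finset.sum_le_sum keyA
  have hB : (∑ j ∈ Icc (k+2) n, r2 ^ ((n-k-1)*(n-k-2)/2 + (n-j))) * r1^c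
      < r2^c * (∑ j ∈ Icc (k+2) n, r1 ^ ((n-k-1)*(n-k-2)/2 + (n-j))) := by
    rw [Finset.mul_sum, Finset.sum_mul]
    exact Finset.sum_lt_sum_of_nonempty (Finset.nonempty_Icc.2 (by omega)) keyB
  rw [P_eq n k hk hkn] at hP ⊢
  have hr1c : (0:ℝ) < r1^c := by positivity
  have hr2c : (0:ℝ) < r2^c := by positivity
  nlinarith [mul_nonneg hr2c.le hP]
lemma even_mul_pred (m : ℕ) : Even (m * (m-1)) := by
  rcases Nat.eq_zero_or_pos m with h | h
  · simp [h]
  · obtain ⟨t, rfl⟩ : ∃ t, m = t + 1 := ⟨m - 1, by omega⟩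
    simpa [Nat.mul_comm] using Nat.even_mul_succ_self t

lemma half2 (x : ℕ) (h : Even x) : 2*(x/2) = x := by
  rw [Nat.mul_comm]; exact Nat.div_mul_cancel h.two_dvd

lemma exp_ineq (n k : ℕ) (hk : 1 ≤ k) (hkn : k+2 ≤ n) :
    (n-k-1)*(n-k-2)/2 + (n-k-1) + (n-2) ≤ (n-1)*(n-1-1)/2 + (n-k-1) := by
  have d1 : 2*(((n-1)*(n-1-1))/2) = (n-1)*(n-1-1) := half2 _ (even_mul_pred (n-1))
  have e2 : Even ((n-k-1)*(n-k-2)) := by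
    have h := even_mul_pred (n-k-1)
    have hq : (n-k-1)*(n-k-1-1) = (n-k-1)*(n-k-2) := by
      have h2 : n-k-1-1 = n-k-2 := by omega
      rw [h2]
    rwa [hq] at h
  have d2 : 2*(((n-k-1)*(n-k-2))/2) = (n-k-1)*(n-k-2) := half2 _ e2
  have m1 : (n-k-1)*(n-k-2) ≤ (n-2)*(n-3) := Nat.mul_le_mul (by omega) (by omega)
  have m2 : (n-2)*(n-3) + 2*(n-2) = (n-1)*(n-1-1) := by
    zify [show 3 ≤ n by omega, show 2 ≤ n by omega, show 1 ≤ n by omega,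
      show 1 ≤ n - 1 by omega]
    ring
  omega

lemma far_pos (n k : ℕ) (hk : 1 ≤ k) (hkn : k+2 ≤ n) {r : ℝ} (hr : 1 < r)
    (hfar : 1 ≤ (r-1) * r^(n-2)) : 0 < P n k r := by
  rw [P_eq n k hk hkn]
  have hr0 : (0:ℝ) < r := by linarith
  have hr1 : (0:ℝ) < r - 1 := by linarith
  -- reindex the negative sum
  have hBsum : (∑ j ∈ Icc (k+2) n, r ^ ((n-k-1)*(n-k-2)/2 + (n-j)))
      = ∑ m ∈ Finset.range (n-k-1), r ^ ((n-k-1)*(n-k-2)/2) * r^m := by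
    refine Finset.sum_nbij' (fun j => n - j) (fun m => n - m) ?_ ?_ ?_ ?_ ?_
    · intro a ha; simp only [Finset.mem_Icc] at ha; simp only [Finset.mem_range]; omega
    · intro a ha; simp only [Finset.mem_range] at ha; simp only [Finset.mem_Icc]; omega
    · intro a ha; simp only [Finset.mem_Icc] at ha; omega
    · intro a ha; simp only [Finset.mem_range] at ha; omega
    · intro a ha; rw [← pow_add]
  rw [hBsum, ← Finset.mul_sum, geom_sum_eq (ne_of_gt hr)]
  -- lower bound positive sum by its first term
  have hA : r ^ ((n-1)*(n-1-1)/2 + (n-k-1)) ≤ ∑ i ∈ Icc 1 k, r ^ ((n-i)*(n-i-1)/2 + (n-k-1)) := by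
    have := Finset.single_le_sum (f := fun i => r ^ ((n-i)*(n-i-1)/2 + (n-k-1)))
      (fun i _ => by positivity) (Finset.mem_Icc.2 ⟨le_refl 1, hk⟩)
    simpa using this
  -- bound the geometric part
  have hB : r ^ ((n-k-1)*(n-k-2)/2) * ((r ^ (n-k-1) - 1) / (r - 1))
      < r ^ ((n-1)*(n-1-1)/2 + (n-k-1)) := by
    have h1 : (r ^ (n-k-1) - 1) / (r - 1) < r ^ (n-k-1) / (r-1) := by
      apply div_lt_div_of_pos_right ?_ hr1
      linarith
    have h2 : r ^ (n-k-1) / (r-1) ≤ r ^ (n-k-1) * r^(n-2) := by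
      rw [div_le_iff₀ hr1]
      calc r ^ (n-k-1) = r ^ (n-k-1) * 1 := by ring
      _ ≤ r ^ (n-k-1) * ((r-1) * r^(n-2)) := by
          apply mul_le_mul_of_nonneg_left hfar (by positivity)
      _ = r ^ (n-k-1) * r ^ (n-2) * (r-1) := by ring
    have h3 : r ^ ((n-k-1)*(n-k-2)/2) * (r ^ (n-k-1) * r^(n-2))
        = r ^ ((n-k-1)*(n-k-2)/2 + (n-k-1) + (n-2)) := by
      rw [pow_add, pow_add, mul_assoc]
    have h4 : r ^ ((n-k-1)*(n-k-2)/2 + (n-k-1) + (n-2)) ≤ r ^ ((n-1)*(n-1-1)/2 + (n-k-1)) :=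
      pow_le_pow_right₀ hr.le (exp_ineq n k hk hkn)
    calc r ^ ((n-k-1)*(n-k-2)/2) * ((r ^ (n-k-1) - 1) / (r - 1))
        < r ^ ((n-k-1)*(n-k-2)/2) * (r ^ (n-k-1) * r^(n-2)) := by
          apply mul_lt_mul_of_pos_left (lt_of_lt_of_le h1 h2) (by positivity)
    _ ≤ r ^ ((n-1)*(n-1-1)/2 + (n-k-1)) := by rw [h3]; exact h4
  linarith
lemma step (n k : ℕ) (hk : 1 ≤ k) (hkn : k + 3 ≤ n) {x : ℝ} (hx : 1 ≤ x)
    (hroot : P n k x = 0) : 0 < P n (k+1) x := by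
  have hx0 : (0:ℝ) < x := by linarith
  rw [P_eq n k hk (by omega)] at hroot
  rw [P_eq n (k+1) (by omega) (by omega)]
  simp only [show n - (k+1) - 1 = n - k - 2 from by omega,
    show n - (k+1) - 2 = n - k - 3 from by omega]
  -- names
  have hG : (n-k-1)*(n-k-2)/2 = (n-k-2)*(n-k-3)/2 + (n-k-2) := by
    have hq1 : (n-k-1)*(n-k-2) = (n-k-2)*(n-k-3) + 2*(n-k-2) := by
      zify [show k+3 ≤ n from hkn, show k+2 ≤ n from by omega, show k+1 ≤ n from by omega,
        show 1 ≤ n - k - 1 from by omega, show 1 ≤ n - k - 2 from by omega,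
        show 2 ≤ n - k from by omega, show 3 ≤ n - k from by omega, show 1 ≤ n - k from by omega]
      ring
    have e1 : Even ((n-k-1)*(n-k-2)) := by
      have h := even_mul_pred (n-k-1)
      rwa [show n-k-1-1 = n-k-2 from by omega] at h
    have e2 : Even ((n-k-2)*(n-k-3)) := by
      have h := even_mul_pred (n-k-2)
      rwa [show n-k-2-1 = n-k-3 from by omega] at h
    have d1 := half2 _ e1
    have d2 := half2 _ e2
    omega
  -- split A'
  have hsplitA : (∑ i ∈ Icc 1 (k+1), x ^ ((n-i)*(n-i-1)/2 + (n-k-2)))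
      = (∑ i ∈ Icc 1 k, x ^ ((n-i)*(n-i-1)/2 + (n-k-2)))
        + x ^ ((n-k-1)*(n-k-2)/2 + (n-k-2)) := by
    rw [Finset.sum_Icc_succ_top (by omega : 1 ≤ k+1)]
    congr 2 <;> omega
  -- split B
  have hsplitB : (∑ j ∈ Icc (k+2) n, x ^ ((n-k-1)*(n-k-2)/2 + (n-j)))
      = x ^ ((n-k-1)*(n-k-2)/2 + (n-k-2))
        + ∑ j ∈ Icc (k+3) n, x ^ ((n-k-1)*(n-k-2)/2 + (n-j)) := by
    have hins : Icc (k+2) n = insert (k+2) (Icc (k+3) n) := by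
      ext a; simp only [Finset.mem_Icc, Finset.mem_insert]; omega
    rw [hins, Finset.sum_insert (by simp only [Finset.mem_Icc]; omega)]
    congr 2 <;> omega
  -- claim 1
  have c1 : x^(n-k-1) * (∑ i ∈ Icc 1 (k+1), x ^ ((n-i)*(n-i-1)/2 + (n-k-2)))
      = x^(n-k-2) * (∑ i ∈ Icc 1 k, x ^ ((n-i)*(n-i-1)/2 + (n-k-1)))
        + x ^ ((n-k-1)*(n-k-2)/2 + (n-k-2) + (n-k-1)) := by
    rw [hsplitA, mul_add]
    congr 1
    · rw [Finset.mul_sum, Finset.mul_sum]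
      refine Finset.sum_congr rfl fun i _ => ?_
      rw [← pow_add, ← pow_add]
      congr 1
      omega
    · rw [← pow_add]
      congr 1
      omega
  -- claim 2
  have c2 : x * (∑ j ∈ Icc (k+2) n, x ^ ((n-k-1)*(n-k-2)/2 + (n-j)))
      = x ^ ((n-k-1)*(n-k-2)/2 + (n-k-2) + 1)
        + x^(n-k-1) * (∑ j ∈ Icc (k+3) n, x ^ ((n-k-2)*(n-k-3)/2 + (n-j))) := by
    rw [hsplitB, mul_add]
    congr 1
    · rw [← pow_succ']
    · rw [Finset.mul_sum, Finset.mul_sum]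
      refine Finset.sum_congr rfl fun j hj => ?_
      rw [← pow_succ', ← pow_add]
      congr 1
      omega
  -- combine
  have hAB : (∑ i ∈ Icc 1 k, x ^ ((n-i)*(n-i-1)/2 + (n-k-1)))
      = ∑ j ∈ Icc (k+2) n, x ^ ((n-k-1)*(n-k-2)/2 + (n-j)) := by linarith
  have key : x^(n-k-1) * ((∑ i ∈ Icc 1 (k+1), x ^ ((n-i)*(n-i-1)/2 + (n-k-2)))
        - ∑ j ∈ Icc (k+3) n, x ^ ((n-k-2)*(n-k-3)/2 + (n-j)))
      = (x^(n-k-2) - x) * (∑ j ∈ Icc (k+2) n, x ^ ((n-k-1)*(n-k-2)/2 + (n-j)))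
        + x ^ ((n-k-1)*(n-k-2)/2 + (n-k-2) + (n-k-1))
        + x ^ ((n-k-1)*(n-k-2)/2 + (n-k-2) + 1) := by
    rw [mul_sub, c1, hAB]
    linear_combination c2
  have hBnn : (0:ℝ) ≤ ∑ j ∈ Icc (k+2) n, x ^ ((n-k-1)*(n-k-2)/2 + (n-j)) :=
    Finset.sum_nonneg fun j _ => by positivity
  have hpow : x ≤ x^(n-k-2) := by
    calc x = x^1 := (pow_one x).symm
    _ ≤ x^(n-k-2) := pow_le_pow_right₀ hx (by omega)
  have hprod : 0 < x^(n-k-1) * ((∑ i ∈ Icc 1 (k+1), x ^ ((n-i)*(n-i-1)/2 + (n-k-2)))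
        - ∑ j ∈ Icc (k+3) n, x ^ ((n-k-2)*(n-k-3)/2 + (n-j))) := by
    rw [key]
    have h1 : 0 ≤ (x^(n-k-2) - x) * (∑ j ∈ Icc (k+2) n, x ^ ((n-k-1)*(n-k-2)/2 + (n-j))) :=
      mul_nonneg (by linarith) hBnn
    have h2 := pow_pos hx0 ((n-k-1)*(n-k-2)/2 + (n-k-2) + (n-k-1))
    have h3 := pow_pos hx0 ((n-k-1)*(n-k-2)/2 + (n-k-2) + 1)
    linarith
  nlinarith [pow_pos hx0 (n-k-1), hprod]
/-- For n ≥ 6, the thresholds r_k(n) (the unique roots in (1,2) of P^{n,k})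
are strictly decreasing in k for 1 ≤ k ≤ ⌊n/2⌋ - 2; moreover, for each
fixed k ≥ 1, r_k(n) → 1 as n → ∞. -/
theorem stmt_18 (ρ : ℕ → ℕ → ℝ)
    (hρ : ∀ n k : ℕ, 6 ≤ n → 1 ≤ k → k ≤ n / 2 - 1 →
      ρ k n ∈ Set.Ioo (1 : ℝ) 2 ∧ P n k (ρ k n) = 0) :
    (∀ n k : ℕ, 6 ≤ n → 1 ≤ k → k ≤ n / 2 - 2 → ρ (k + 1) n < ρ k n) ∧
    (∀ k : ℕ, 1 ≤ k → Tendsto (fun n => ρ k n) atTop (nhds 1)) := by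
  constructor
  · intro n k hn hk hk2
    obtain ⟨⟨hx1, hx2⟩, hxr⟩ := hρ n k hn hk (by omega)
    obtain ⟨⟨hy1, hy2⟩, hyr⟩ := hρ n (k+1) hn (by omega) (by omega)
    by_contra hcon
    push_neg at hcon
    have hkn3 : k + 3 ≤ n := by omega
    have hstep := step n k hk hkn3 hx1.le hxr
    rcases eq_or_lt_of_le hcon with heq | hlt
    · rw [heq, hyr] at hstep; exact lt_irrefl 0 hstep
    · have h2 := key_mono n (k+1) (by omega) (by omega) hx1.le hlt hstep.le
      rw [hyr] at h2; exact lt_irrefl 0 h2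
  · intro k hk
    rw [tendsto_order]
    constructor
    · intro a ha
      filter_upwards [eventually_ge_atTop (2*k+2+6)] with n hn2
      have h := hρ n k (by omega) hk (by omega)
      exact lt_trans ha h.1.1
    · intro b hb
      have hminb : (1:ℝ) < min b 2 := lt_min hb one_lt_two
      set r1 : ℝ := 1 + (min b 2 - 1)/2 with hr1def
      have h1r1 : 1 < r1 := by rw [hr1def]; linarith
      have hpos : (0:ℝ) < r1 - 1 := by linarith
      have hr1b : r1 < b := by
        have hmb := min_le_left b 2
        rw [hr1def]; linarith
      have htends : Tendsto (fun m : ℕ => r1 ^ m) atTop atTop :=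
        tendsto_pow_atTop_atTop_of_one_lt h1r1
      obtain ⟨N, hN⟩ := eventually_atTop.1 (tendsto_atTop.1 htends (1/(r1 - 1)))
      filter_upwards [eventually_ge_atTop (2*k+2+6 + (N+2))] with n hn2
      have hfar : 1 ≤ (r1 - 1) * r1^(n-2) := by
        have h' := hN (n-2) (by omega)
        have h'' := mul_le_mul_of_nonneg_left h' hpos.le
        rwa [mul_one_div, div_self (ne_of_gt hpos)] at h''
      obtain ⟨⟨hx1, hx2⟩, hxr⟩ := hρ n k (by omega) hk (by omega)
      by_contra hcon
      push_neg at hcon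
      have hfp : 0 < P n k r1 := far_pos n k hk (by omega) h1r1 hfar
      have hkm : 0 < P n k (ρ k n) :=
        key_mono n k hk (by omega) h1r1.le (lt_of_lt_of_le hr1b hcon) hfp.le
      rw [hxr] at hkm; exact lt_irrefl 0 hkm
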